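/- Let p be an odd prime, n ≥ 1, and R a commutative ring in which p·1 = 0. Let F ∈ R⟦X,Y⟧ be a formal group law (F(X,0) = X, F(0,Y) = Y, F(X,Y) = F(Y,X), F(F(X,Y),Z) = F(X,F(Y,Z)), zero constant term) such that F(X,Y) ≡ X + Y modulo the ideal (X,Y)^{p^n} of R⟦X,Y⟧. If f ∈ R⟦X⟧ satisfies f ≡ X (mod X²) and f(F(X,Y)) = F(f(X), f(Y)), then there exist a_1, …, a_{n−1} ∈ R with f ≡ X + Σ_{k=1}^{n−1} a_k X^{p^k} (mod X^{p^n}); thus the truncation of f lies in the group G(R) of classes in R[X]/(X^{p^n}) of polynomials X + Σ_{k=1}^{n−1} a_k X^{p^k}. Moreover, for two such power series f and g, the truncation of g(f(X)) modulo X^{p^n} equals the composite in R[X]/(X^{p^n}) of the truncation of g with the truncation of f; hence truncation modulo X^{p^n} is a group homomorphism α from the group of strict automorphisms of F (under f·g = g∘f) to G(R). -/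

import Mathlib

open Polynomial

/-- Substitution of a multivariate power series `a` (with zero constant term) for the
variable of a one-variable power series `f`; this is the usual substitution whenever `a`
has zero constant term. -/
noncomputable def substPS {R : Type} [CommRing R] {σ : Type} (a : MvPowerSeries σ R)
    (f : PowerSeries R) : MvPowerSeries σ R :=
  fun d => ∑ m ∈ Finset.range (d.sum (fun _ k => k) + 1),
    PowerSeries.coeff m f * MvPowerSeries.coeff d (a ^ m)

/-- Substitution of two power series `g₀, g₁` (with zero constant terms) for the two
variables of `F ∈ R⟦X,Y⟧`. -/
noncomputable def subst2 {R : Type} [CommRing R] {σ : Type} (g₀ g₁ : MvPowerSeries σ R)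
    (F : MvPowerSeries (Fin 2) R) : MvPowerSeries σ R :=
  fun d => ∑ i ∈ Finset.range (d.sum (fun _ k => k) + 1),
    ∑ j ∈ Finset.range (d.sum (fun _ k => k) + 1),
      MvPowerSeries.coeff (Finsupp.single (0 : Fin 2) i + Finsupp.single (1 : Fin 2) j) F *
        MvPowerSeries.coeff d (g₀ ^ i * g₁ ^ j)




-- combinatorial lemma via Lucas
lemma aux_choose (p : ℕ) (hp : p.Prime) (k t : ℕ) (ht : ¬ p ∣ t) :
    ¬ p ∣ Nat.choose (p ^ k * t) (p ^ k) := by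
  haveI := Fact.mk hp
  induction k with
  | zero => simpa using ht
  | succ k ih =>
    have h := @Choose.choose_modEq_choose_mod_mul_choose_div_nat (p ^ (k+1) * t) (p ^ (k+1)) p _
    have h1 : (p ^ (k+1) * t) % p = 0 := by
      simp [Nat.mul_mod, Nat.pow_mod, Nat.pow_succ]
    have h2 : (p ^ (k+1)) % p = 0 := by
      simp [Nat.pow_mod, Nat.pow_succ]
    have h3 : (p ^ (k+1) * t) / p = p ^ k * t := by
      rw [pow_succ, mul_comm (p^k) p, mul_assoc, Nat.mul_div_cancel_left _ hp.pos]
    have h4 : (p ^ (k+1)) / p = p ^ k := by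
      rw [pow_succ, Nat.mul_div_cancel _ hp.pos]
    rw [h1, h2, h3, h4] at h
    simp only [Nat.choose_zero_right, one_mul] at h
    intro hd
    exact ih (Nat.modEq_zero_iff_dvd.1 (h.symm.trans (Nat.modEq_zero_iff_dvd.2 hd)))

lemma aux_cancel {R : Type} [CommRing R] (p : ℕ) (hp : p.Prime) (hpR : (p:R) = 0)
    (c : ℕ) (hc : ¬ p ∣ c) (x : R) (h : (c : R) * x = 0) : x = 0 := by
  have hco : Nat.Coprime p c := (Nat.Prime.coprime_iff_not_dvd hp).2 hc
  have hb := Nat.gcd_eq_gcd_ab p c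
  rw [hco] at hb
  have : (1 : R) = (c : R) * ((Nat.gcdB p c : ℤ) : R) := by
    have := congrArg (fun z : ℤ => (z : R)) hb
    push_cast at this
    rw [hpR] at this
    simpa using this
  calc x = ((c : R) * ((Nat.gcdB p c : ℤ) : R)) * x := by rw [← this, one_mul]
    _ = ((Nat.gcdB p c : ℤ) : R) * ((c:R) * x) := by ring
    _ = 0 := by rw [h, mul_zero]


lemma aux_coeff_mul_low {R σ : Type} [CommRing R] [DecidableEq σ] (a b : ℕ) (x y : MvPowerSeries σ R)
    (hx : ∀ d : σ →₀ ℕ, d.sum (fun _ k => k) < a → MvPowerSeries.coeff d x = 0)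
    (hy : ∀ d : σ →₀ ℕ, d.sum (fun _ k => k) < b → MvPowerSeries.coeff d y = 0) :
    ∀ d : σ →₀ ℕ, d.sum (fun _ k => k) < a + b → MvPowerSeries.coeff d (x * y) = 0 := by
  intro d hd
  rw [MvPowerSeries.coeff_mul]
  apply Finset.sum_eq_zero
  rintro ⟨d1, d2⟩ hmem
  rw [Finset.HasAntidiagonal.mem_antidiagonal] at hmem
  have hsum : d1.sum (fun _ k => k) + d2.sum (fun _ k => k) = d.sum (fun _ k => k) := by
    rw [← hmem, Finsupp.sum_add_index']
    · intro _; rfl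
    · intro _ _ _; rfl
  have : d1.sum (fun _ k => k) < a ∨ d2.sum (fun _ k => k) < b := by omega
  rcases this with h | h
  · rw [hx d1 h, zero_mul]
  · rw [hy d2 h, mul_zero]

/-- The ideal of multivariate power series whose coefficients in total degree `< N` vanish. -/
def lowIdeal (R σ : Type) [CommRing R] [DecidableEq σ] (N : ℕ) : Ideal (MvPowerSeries σ R) where
  carrier := {x | ∀ d : σ →₀ ℕ, d.sum (fun _ k => k) < N → MvPowerSeries.coeff d x = 0}
  add_mem' := fun ha hb d hd => by rw [map_add, ha d hd, hb d hd, add_zero]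
  zero_mem' := fun d _ => by simp
  smul_mem' := fun c x hx => by
    intro d hd
    rw [smul_eq_mul]
    exact aux_coeff_mul_low 0 N c x (fun _ h => absurd h (Nat.not_lt_zero _)) hx d
      (by simpa using hd)

lemma aux_span_pow_le (R : Type) [CommRing R] (N : ℕ) :
    (Ideal.span {(MvPowerSeries.X 0 : MvPowerSeries (Fin 2) R), MvPowerSeries.X 1}) ^ N ≤
      lowIdeal R (Fin 2) N := by
  have hgen : Ideal.span {(MvPowerSeries.X 0 : MvPowerSeries (Fin 2) R), MvPowerSeries.X 1} ≤
      lowIdeal R (Fin 2) 1 := by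
    rw [Ideal.span_le]
    rintro x (rfl | rfl) <;>
    · intro d hd
      rw [MvPowerSeries.coeff_X]
      split_ifs with h
      · exfalso
        subst h
        rw [Finsupp.sum_single_index rfl] at hd
        omega
      · rfl
  induction N with
  | zero =>
    intro x _ d hd
    exact absurd hd (Nat.not_lt_zero _)
  | succ N ih =>
    rw [pow_succ]
    refine Ideal.mul_le.2 fun r hr s hs => ?_
    exact fun d hd => aux_coeff_mul_low N 1 r s (ih hr) (hgen hs) d hd

lemma aux_pow_low {R σ : Type} [CommRing R] [DecidableEq σ] (x : MvPowerSeries σ R)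
    (hx : ∀ d : σ →₀ ℕ, d.sum (fun _ k => k) < 1 → MvPowerSeries.coeff d x = 0) (m : ℕ) :
    ∀ d : σ →₀ ℕ, d.sum (fun _ k => k) < m → MvPowerSeries.coeff d (x ^ m) = 0 := by
  induction m with
  | zero => exact fun d hd => absurd hd (Nat.not_lt_zero _)
  | succ m ih =>
    rw [pow_succ]
    exact aux_coeff_mul_low m 1 _ _ ih hx


open Finsupp in
lemma aux_pair_eq_iff (i j k l : ℕ) :
    (single (0 : Fin 2) i + single (1 : Fin 2) j) = (single (0 : Fin 2) k + single (1 : Fin 2) l)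
      ↔ i = k ∧ j = l := by
  constructor
  · intro h
    constructor
    · have h0 := congrFun (congrArg DFunLike.coe h) 0
      simpa [Finsupp.single_apply] using h0
    · have h1 := congrFun (congrArg DFunLike.coe h) 1
      simpa [Finsupp.single_apply] using h1
  · rintro ⟨rfl, rfl⟩; rfl

open Finsupp in
lemma aux_pair_sum (i j : ℕ) :
    (single (0 : Fin 2) i + single (1 : Fin 2) j).sum (fun _ k => k) = i + j := by
  rw [Finsupp.sum_add_index' (fun _ => rfl) (fun _ _ _ => rfl),
    Finsupp.sum_single_index rfl, Finsupp.sum_single_index rfl]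

open Finsupp in
lemma aux_coeff_add_pow (R : Type) [CommRing R] (m i j : ℕ) :
    MvPowerSeries.coeff (single (0 : Fin 2) i + single (1 : Fin 2) j)
        ((MvPowerSeries.X 0 + MvPowerSeries.X 1 : MvPowerSeries (Fin 2) R) ^ m) =
      if i + j = m then (m.choose i : R) else 0 := by
  have hterm : ∀ k, (MvPowerSeries.X 0 : MvPowerSeries (Fin 2) R) ^ k *
      MvPowerSeries.X 1 ^ (m - k) * (m.choose k : MvPowerSeries (Fin 2) R) =
      MvPowerSeries.monomial (single (0 : Fin 2) k + single (1 : Fin 2) (m - k))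
        (m.choose k : R) := by
    intro k
    have hc : (m.choose k : MvPowerSeries (Fin 2) R) =
        MvPowerSeries.monomial 0 ((m.choose k : R)) := by
      simp [← MvPowerSeries.coeff_zero_eq_constantCoeff]
    rw [MvPowerSeries.X_pow_eq, MvPowerSeries.X_pow_eq, MvPowerSeries.monomial_mul_monomial,
      hc, MvPowerSeries.monomial_mul_monomial]
    simp
  rw [add_pow, map_sum]
  simp only [hterm, MvPowerSeries.coeff_monomial]
  by_cases h : i + j = m
  · rw [if_pos h]
    rw [Finset.sum_eq_single_of_mem i (Finset.mem_range.2 (by omega))]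
    · rw [if_pos (by rw [aux_pair_eq_iff]; omega)]
    · intro k hk hki
      rw [if_neg]
      rw [aux_pair_eq_iff]
      omega
  · rw [if_neg h]
    apply Finset.sum_eq_zero
    intro k hk
    rw [Finset.mem_range] at hk
    rw [if_neg]
    rw [aux_pair_eq_iff]
    omega
open Finsupp in
-- coefficient of substPS a f as a sum
lemma aux_substPS_apply {R : Type} [CommRing R] {σ : Type} (a : MvPowerSeries σ R)
    (f : PowerSeries R) (d : σ →₀ ℕ) :
    MvPowerSeries.coeff d (substPS a f) =
      ∑ m ∈ Finset.range (d.sum (fun _ k => k) + 1),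
        PowerSeries.coeff m f * MvPowerSeries.coeff d (a ^ m) := rfl

open Finsupp in
lemma aux_substX_low {R : Type} [CommRing R] (s : Fin 2) (f : PowerSeries R)
    (hf0 : PowerSeries.coeff 0 f = 0) (d : Fin 2 →₀ ℕ) (hd : d.sum (fun _ k => k) < 1) :
    MvPowerSeries.coeff d (substPS (MvPowerSeries.X s : MvPowerSeries (Fin 2) R) f) = 0 := by
  rw [aux_substPS_apply]
  have h0 : d.sum (fun _ k => k) = 0 := by omega
  rw [h0, Finset.sum_range_one, hf0, zero_mul]

open Finsupp in
lemma aux_substX_ne {R : Type} [CommRing R] (s t : Fin 2) (hst : s ≠ t) (f : PowerSeries R)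
    (d : Fin 2 →₀ ℕ) (hd : d t ≠ 0) :
    MvPowerSeries.coeff d (substPS (MvPowerSeries.X s : MvPowerSeries (Fin 2) R) f) = 0 := by
  rw [aux_substPS_apply]
  apply Finset.sum_eq_zero
  intro m _
  rw [MvPowerSeries.X_pow_eq, MvPowerSeries.coeff_monomial]
  rw [if_neg, mul_zero]
  intro h
  subst h
  rw [Finsupp.single_apply, if_neg hst] at hd
  exact hd rfl

open Finsupp in
lemma aux_additive {R : Type} [CommRing R] (N : ℕ)
    (F : MvPowerSeries (Fin 2) R)
    (hFlow : ∀ d : Fin 2 →₀ ℕ, d.sum (fun _ k => k) < N →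
      MvPowerSeries.coeff d (F - (MvPowerSeries.X 0 + MvPowerSeries.X 1)) = 0)
    (f : PowerSeries R) (hf0 : PowerSeries.coeff 0 f = 0)
    (hff : substPS F f = subst2 (substPS (MvPowerSeries.X 0) f) (substPS (MvPowerSeries.X 1) f) F)
    (m i : ℕ) (hm : m < N) (hi : 0 < i) (him : i < m) :
    (m.choose i : R) * PowerSeries.coeff m f = 0 := by
  set u := substPS (MvPowerSeries.X 0 : MvPowerSeries (Fin 2) R) f with hu
  set v := substPS (MvPowerSeries.X 1 : MvPowerSeries (Fin 2) R) f with hv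
  set d : Fin 2 →₀ ℕ := single (0 : Fin 2) i + single (1 : Fin 2) (m - i) with hd
  have hdsum : d.sum (fun _ k => k) = m := by rw [hd, aux_pair_sum]; omega
  have h := congrFun hff d
  -- LHS
  have hFpow : ∀ m' : ℕ, MvPowerSeries.coeff d (F ^ m') =
      MvPowerSeries.coeff d ((MvPowerSeries.X 0 + MvPowerSeries.X 1 :
        MvPowerSeries (Fin 2) R) ^ m') := by
    intro m'
    obtain ⟨w, hw⟩ := sub_dvd_pow_sub_pow F (MvPowerSeries.X 0 + MvPowerSeries.X 1) m'
    have : MvPowerSeries.coeff d (F ^ m' -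
        (MvPowerSeries.X 0 + MvPowerSeries.X 1 : MvPowerSeries (Fin 2) R) ^ m') = 0 := by
      rw [hw]
      exact aux_coeff_mul_low N 0 _ w hFlow (fun _ h => absurd h (Nat.not_lt_zero _)) d
        (by omega)
    rw [map_sub, sub_eq_zero] at this
    exact this
  have hL : (substPS F f) d = PowerSeries.coeff m f * (m.choose i : R) := by
    show MvPowerSeries.coeff d (substPS F f) = _
    rw [aux_substPS_apply, hdsum]
    rw [Finset.sum_eq_single_of_mem m (Finset.mem_range.2 (by omega))]
    · rw [hFpow, hd, aux_coeff_add_pow, if_pos (by omega)]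
    · intro m' _ hm'
      rw [hFpow, hd, aux_coeff_add_pow, if_neg (by omega), mul_zero]
  -- RHS
  have hR : (subst2 u v F) d = 0 := by
    show MvPowerSeries.coeff d (subst2 u v F) = 0
    have hulow := aux_substX_low (R := R) 0 f hf0
    have hvlow := aux_substX_low (R := R) 1 f hf0
    show (∑ i' ∈ Finset.range (d.sum (fun _ k => k) + 1),
      ∑ j' ∈ Finset.range (d.sum (fun _ k => k) + 1),
        MvPowerSeries.coeff (single (0 : Fin 2) i' + single (1 : Fin 2) j') F *
          MvPowerSeries.coeff d (u ^ i' * v ^ j')) = 0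
    apply Finset.sum_eq_zero
    intro i' _
    apply Finset.sum_eq_zero
    intro j' _
    by_cases hij : i' + j' < N
    · -- F coefficient is that of X0 + X1
      have hFc : MvPowerSeries.coeff (single (0 : Fin 2) i' + single (1 : Fin 2) j') F =
          MvPowerSeries.coeff (single (0 : Fin 2) i' + single (1 : Fin 2) j')
            (MvPowerSeries.X 0 + MvPowerSeries.X 1 : MvPowerSeries (Fin 2) R) := by
        have := hFlow (single (0 : Fin 2) i' + single (1 : Fin 2) j') (by rw [aux_pair_sum]; omega)
        rw [map_sub, sub_eq_zero] at this
        exact this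
      rw [hFc, map_add]
      have hX0 : MvPowerSeries.coeff (single (0 : Fin 2) i' + single (1 : Fin 2) j')
          (MvPowerSeries.X 0 : MvPowerSeries (Fin 2) R) = if i' = 1 ∧ j' = 0 then 1 else 0 := by
        rw [MvPowerSeries.coeff_X]
        congr 1
        rw [eq_iff_iff]
        constructor
        · intro hh
          have : single (0 : Fin 2) i' + single (1 : Fin 2) j' =
              single (0 : Fin 2) 1 + single (1 : Fin 2) 0 := by
            rw [hh, Finsupp.single_zero, add_zero]
          rw [aux_pair_eq_iff] at this
          exact this
        · rintro ⟨rfl, rfl⟩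
          rw [Finsupp.single_zero, add_zero]
      have hX1 : MvPowerSeries.coeff (single (0 : Fin 2) i' + single (1 : Fin 2) j')
          (MvPowerSeries.X 1 : MvPowerSeries (Fin 2) R) = if i' = 0 ∧ j' = 1 then 1 else 0 := by
        rw [MvPowerSeries.coeff_X]
        congr 1
        rw [eq_iff_iff]
        constructor
        · intro hh
          have : single (0 : Fin 2) i' + single (1 : Fin 2) j' =
              single (0 : Fin 2) 0 + single (1 : Fin 2) 1 := by
            rw [hh, Finsupp.single_zero, zero_add]
          rw [aux_pair_eq_iff] at this
          exact this
        · rintro ⟨rfl, rfl⟩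
          rw [Finsupp.single_zero, zero_add]
      rw [hX0, hX1]
      by_cases h10 : i' = 1 ∧ j' = 0
      · obtain ⟨rfl, rfl⟩ := h10
        have : MvPowerSeries.coeff d (u ^ 1 * v ^ 0) = 0 := by
          rw [pow_one, pow_zero, mul_one]
          apply aux_substX_ne 0 1 (by decide) f
          rw [hd]
          simp [Finsupp.single_apply]
          omega
        rw [this, mul_zero]
      · by_cases h01 : i' = 0 ∧ j' = 1
        · obtain ⟨rfl, rfl⟩ := h01
          have : MvPowerSeries.coeff d (u ^ 0 * v ^ 1) = 0 := by
            rw [pow_zero, pow_one, one_mul]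
            apply aux_substX_ne 1 0 (by decide) f
            rw [hd]
            simp [Finsupp.single_apply]
            omega
          rw [this, mul_zero]
        · rw [if_neg h10, if_neg h01, add_zero, zero_mul]
    · -- high degree: the product vanishes
      have : MvPowerSeries.coeff d (u ^ i' * v ^ j') = 0 := by
        exact aux_coeff_mul_low i' j' _ _ (aux_pow_low u hulow i') (aux_pow_low v hvlow j') d
          (by rw [hdsum]; omega)
      rw [this, mul_zero]
  rw [hL] at h
  rw [hR] at h
  rw [mul_comm] at h
  exact h

lemma aux_claim1 {R : Type} [CommRing R] (p n : ℕ) (hp : p.Prime) (hn : 1 ≤ n)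
    (hpR : (p : R) = 0) (F : MvPowerSeries (Fin 2) R)
    (hFlow : ∀ d : Fin 2 →₀ ℕ, d.sum (fun _ k => k) < p ^ n →
      MvPowerSeries.coeff d (F - (MvPowerSeries.X 0 + MvPowerSeries.X 1)) = 0)
    (f : PowerSeries R)
    (hf2 : f - PowerSeries.X ∈ Ideal.span {(PowerSeries.X : PowerSeries R) ^ 2})
    (hff : substPS F f = subst2 (substPS (MvPowerSeries.X 0) f)
      (substPS (MvPowerSeries.X 1) f) F) :
    f - (PowerSeries.X + ∑ k ∈ Finset.Ico 1 n,
        PowerSeries.C (PowerSeries.coeff (p ^ k) f) * PowerSeries.X ^ (p ^ k)) ∈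
      Ideal.span {(PowerSeries.X : PowerSeries R) ^ (p ^ n)} := by
  have hdvd2 := (PowerSeries.X_pow_dvd_iff).1 (Ideal.mem_span_singleton.1 hf2)
  have hc0 : PowerSeries.coeff 0 f = 0 := by
    have := hdvd2 0 (by omega)
    simpa using this
  have hc1 : PowerSeries.coeff 1 f = 1 := by
    have := hdvd2 1 (by omega)
    rw [map_sub, PowerSeries.coeff_one_X, sub_eq_zero] at this
    exact this
  have hvan : ∀ d, 2 ≤ d → d < p ^ n → (¬ ∃ k, d = p ^ k) → PowerSeries.coeff d f = 0 := by
    intro d h2 hdN hnp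
    set k := d.factorization p with hk
    have hd0 : d ≠ 0 := by omega
    have hmul : p ^ k * (d / p ^ k) = d := Nat.ordProj_mul_ordCompl_eq_self d p
    set t := d / p ^ k with ht
    have hndvd : ¬ p ∣ t := Nat.not_dvd_ordCompl hp hd0
    have ht2 : 2 ≤ t := by
      rcases Nat.lt_or_ge t 2 with h | h
      · interval_cases t
        · omega
        · exact absurd ⟨k, by omega⟩ hnp
      · exact h
    have hik : 0 < p ^ k := pow_pos hp.pos k
    have hlt : p ^ k < d := by
      have : p ^ k * 2 ≤ p ^ k * t := Nat.mul_le_mul_left _ ht2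
      omega
    have h := aux_additive (p ^ n) F hFlow f hc0 hff d (p ^ k) hdN hik hlt
    have hch : ¬ p ∣ d.choose (p ^ k) := by
      rw [← hmul]
      exact aux_choose p hp k t hndvd
    exact aux_cancel p hp hpR _ hch _ h
  rw [Ideal.mem_span_singleton, PowerSeries.X_pow_dvd_iff]
  intro d hd
  rw [map_sub, map_add, map_sum]
  simp only [PowerSeries.coeff_C_mul, PowerSeries.coeff_X_pow, PowerSeries.coeff_X]
  have hp2 : 2 ≤ p := hp.two_le
  rcases Nat.lt_or_ge d 2 with h2 | h2
  · interval_cases d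
    · rw [hc0, if_neg (by omega), Finset.sum_eq_zero]
      · simp
      · intro k hk
        rw [Finset.mem_Ico] at hk
        rw [if_neg, mul_zero]
        have := pow_pos hp.pos k
        omega
    · rw [hc1, if_pos rfl, Finset.sum_eq_zero]
      · simp
      · intro k hk
        rw [Finset.mem_Ico] at hk
        rw [if_neg, mul_zero]
        have : p ^ 1 ≤ p ^ k := Nat.pow_le_pow_right hp.pos hk.1
        rw [pow_one] at this
        omega
  · by_cases hex : ∃ k, d = p ^ k
    · obtain ⟨k, rfl⟩ := hex
      have hk1 : 1 ≤ k := by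
        by_contra hh
        have : k = 0 := by omega
        subst this
        simp at h2
      have hkn : k < n := by
        have := (Nat.pow_lt_pow_iff_right hp.one_lt).1 hd
        omega
      rw [if_neg (by omega)]
      rw [Finset.sum_eq_single_of_mem k (Finset.mem_Ico.2 ⟨hk1, hkn⟩)]
      · rw [if_pos rfl, mul_one]
        ring
      · intro k' _ hk'
        rw [if_neg, mul_zero]
        intro hh
        exact hk' (Nat.pow_right_injective hp.two_le hh.symm)
    · rw [hvan d h2 hd hex, if_neg (by omega), Finset.sum_eq_zero]
      · simp
      · intro k hk
        rw [Finset.mem_Ico] at hk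
        rw [if_neg, mul_zero]
        intro hh
        exact hex ⟨k, hh⟩

lemma aux_poly_coeff {R : Type} [CommRing R] (p n : ℕ) (a : ℕ → R) (d : ℕ) :
    (Polynomial.X + ∑ k ∈ Finset.Ico 1 n, Polynomial.C (a k) * Polynomial.X ^ (p ^ k)).coeff d =
      PowerSeries.coeff d (PowerSeries.X + ∑ k ∈ Finset.Ico 1 n,
        PowerSeries.C (a k) * PowerSeries.X ^ (p ^ k)) := by
  rw [Polynomial.coeff_add, Polynomial.finset_sum_coeff, map_add, map_sum]
  simp only [Polynomial.coeff_X, Polynomial.coeff_C_mul, Polynomial.coeff_X_pow,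
    PowerSeries.coeff_X, PowerSeries.coeff_C_mul, PowerSeries.coeff_X_pow]
  congr 1
  exact if_congr eq_comm rfl rfl

lemma aux_substPS_coeff {R : Type} [CommRing R] (f g : PowerSeries R) (d : ℕ) :
    PowerSeries.coeff d (substPS f g) =
      ∑ m ∈ Finset.range (d + 1), PowerSeries.coeff m g * PowerSeries.coeff d (f ^ m) := by
  have hc : PowerSeries.coeff (R := R) d = MvPowerSeries.coeff (Finsupp.single () d) :=
    PowerSeries.coeff_def Finsupp.single_eq_same
  rw [hc, aux_substPS_apply]
  have hsum : (Finsupp.single () d).sum (fun _ k => k) = d := Finsupp.sum_single_index rfl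
  rw [hsum]

lemma aux_comp_coeff {R : Type} [CommRing R] (N : ℕ) (q r : Polynomial R)
    (hq : q.natDegree < N) (d : ℕ) :
    (q.comp r).coeff d = ∑ m ∈ Finset.range N, q.coeff m * (r ^ m).coeff d := by
  rw [Polynomial.comp_eq_sum_left, Polynomial.sum_over_range' q (fun e => by simp) N hq,
    Polynomial.finset_sum_coeff]
  exact Finset.sum_congr rfl fun m _ => by rw [Polynomial.coeff_C_mul]

lemma aux_claim3 {R : Type} [CommRing R] (N : ℕ) (hN : 0 < N) (f g : PowerSeries R)
    (hf0 : PowerSeries.constantCoeff f = 0) (d : ℕ) (hd : d < N) :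
    PowerSeries.coeff d (substPS f g) =
      ((PowerSeries.trunc N g).comp (PowerSeries.trunc N f)).coeff d := by
  set q := PowerSeries.trunc N g with hq
  set r := PowerSeries.trunc N f with hr
  have hqdeg : q.natDegree < N := by
    by_cases h0 : q = 0
    · rw [h0]; simpa using hN
    · exact (Polynomial.natDegree_lt_iff_degree_lt h0).2 (PowerSeries.degree_trunc_lt g N)
  have hXdvd : (PowerSeries.X : PowerSeries R) ^ N ∣ f - (r : PowerSeries R) := by
    rw [PowerSeries.X_pow_dvd_iff]
    intro j hj
    rw [map_sub, Polynomial.coeff_coe, hr, PowerSeries.coeff_trunc, if_pos hj, sub_self]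
  have hpow : ∀ m, PowerSeries.coeff d (f ^ m) = (r ^ m).coeff d := by
    intro m
    have h2 : (PowerSeries.X : PowerSeries R) ^ N ∣ f ^ m - (r : PowerSeries R) ^ m :=
      dvd_trans hXdvd (sub_dvd_pow_sub_pow f (r : PowerSeries R) m)
    have h3 := PowerSeries.X_pow_dvd_iff.1 h2 d hd
    rw [map_sub, sub_eq_zero] at h3
    rw [h3, ← Polynomial.coe_pow, Polynomial.coeff_coe]
  rw [aux_substPS_coeff, aux_comp_coeff N q r hqdeg d]
  have hvanish : ∀ m ∈ Finset.range N, m ∉ Finset.range (d + 1) →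
      PowerSeries.coeff m g * PowerSeries.coeff d (f ^ m) = 0 := by
    intro m hm hm2
    rw [Finset.mem_range] at hm hm2
    have hdm : d < m := by omega
    have : (PowerSeries.X : PowerSeries R) ^ m ∣ f ^ m :=
      pow_dvd_pow_of_dvd (PowerSeries.X_dvd_iff.2 hf0) m
    rw [PowerSeries.X_pow_dvd_iff.1 this d hdm, mul_zero]
  rw [Finset.sum_subset (Finset.range_subset_range.2 (show d + 1 ≤ N by omega)) hvanish]
  apply Finset.sum_congr rfl
  intro m hm
  rw [Finset.mem_range] at hm
  rw [hpow m, hq, PowerSeries.coeff_trunc, if_pos hm]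

/-- Let `p` be an odd prime, `n ≥ 1`, `R` a commutative ring with `p·1 = 0`,
and `F ∈ R⟦X,Y⟧` a formal group law with `F(X,Y) ≡ X + Y` modulo the ideal `(X,Y)^(p^n)`.
If `f ∈ R⟦X⟧` is a strict automorphism of `F` (`f ≡ X (mod X²)` and
`f(F(X,Y)) = F(f(X),f(Y))`), then `f ≡ X + Σ_{k=1}^{n-1} a_k X^(p^k)  (mod X^(p^n))` for
some `a_k ∈ R`, so the truncation of `f` lies in `G(R)`; moreover the truncation of
`g(f(X))` equals the composite in `R[X]/(X^(p^n))` of the truncations, so truncation is a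
group homomorphism from the strict automorphisms of `F` (with `f·g = g∘f`) to `G(R)`. -/
theorem stmt_14 (p n : ℕ) (hp : p.Prime) (hodd : Odd p) (hn : 1 ≤ n)
    (R : Type) [CommRing R] (hpR : (p : R) = 0)
    (F : MvPowerSeries (Fin 2) R)
    (hF0 : MvPowerSeries.constantCoeff F = 0)
    (hFX : subst2 (MvPowerSeries.X 0) 0 F = (MvPowerSeries.X 0 : MvPowerSeries (Fin 2) R))
    (hFY : subst2 0 (MvPowerSeries.X 1) F = (MvPowerSeries.X 1 : MvPowerSeries (Fin 2) R))
    (hFcomm : subst2 (MvPowerSeries.X 1) (MvPowerSeries.X 0) F = F)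
    (hFassoc :
      subst2 (subst2 (MvPowerSeries.X 0) (MvPowerSeries.X 1) F)
          (MvPowerSeries.X 2 : MvPowerSeries (Fin 3) R) F =
        subst2 (MvPowerSeries.X 0 : MvPowerSeries (Fin 3) R)
          (subst2 (MvPowerSeries.X 1) (MvPowerSeries.X 2) F) F)
    -- F(X,Y) ≡ X + Y modulo (X,Y)^(p^n)
    (hFadd : F - (MvPowerSeries.X 0 + MvPowerSeries.X 1) ∈
      (Ideal.span {(MvPowerSeries.X 0 : MvPowerSeries (Fin 2) R),
        MvPowerSeries.X 1}) ^ (p ^ n))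
    -- the set of strict automorphisms of F
    (A : Set (PowerSeries R))
    (hA : A = {f | f - PowerSeries.X ∈ Ideal.span {(PowerSeries.X : PowerSeries R) ^ 2} ∧
      substPS F f =
        subst2 (substPS (MvPowerSeries.X 0 : MvPowerSeries (Fin 2) R) f)
          (substPS (MvPowerSeries.X 1 : MvPowerSeries (Fin 2) R) f) F})
    (J : Ideal (Polynomial R))
    (hJ : J = Ideal.span {(X : Polynomial R) ^ (p ^ n)})
    (G : Set (Polynomial R ⧸ J))
    (hG : G = {q | ∃ a : ℕ → R,
      q = Ideal.Quotient.mk J (X + ∑ k ∈ Finset.Ico 1 n, C (a k) * X ^ (p ^ k))}) :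
    -- f ≡ X + Σ_{k=1}^{n-1} a_k X^(p^k) (mod X^(p^n))
    (∀ f ∈ A, ∃ a : ℕ → R,
      f - (PowerSeries.X + ∑ k ∈ Finset.Ico 1 n,
          PowerSeries.C (a k) * PowerSeries.X ^ (p ^ k)) ∈
        Ideal.span {(PowerSeries.X : PowerSeries R) ^ (p ^ n)}) ∧
    -- hence the truncation of f lies in G(R)
    (∀ f ∈ A, Ideal.Quotient.mk J (PowerSeries.trunc (p ^ n) f) ∈ G) ∧
    -- truncation of g(f(X)) = composite of truncations, i.e. truncation is a group
    -- homomorphism (for the products f·g = g∘f on both sides)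
    (∀ f ∈ A, ∀ g ∈ A,
      Ideal.Quotient.mk J (PowerSeries.trunc (p ^ n) (substPS f g)) =
        Ideal.Quotient.mk J
          ((PowerSeries.trunc (p ^ n) g).comp (PowerSeries.trunc (p ^ n) f))) := by
  have hFlow : ∀ d : Fin 2 →₀ ℕ, d.sum (fun _ k => k) < p ^ n →
      MvPowerSeries.coeff d (F - (MvPowerSeries.X 0 + MvPowerSeries.X 1)) = 0 :=
    fun d hd => (aux_span_pow_le R (p ^ n) hFadd) d hd
  have key1 : ∀ f ∈ A, f - (PowerSeries.X + ∑ k ∈ Finset.Ico 1 n,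
      PowerSeries.C (PowerSeries.coeff (p ^ k) f) * PowerSeries.X ^ (p ^ k)) ∈
      Ideal.span {(PowerSeries.X : PowerSeries R) ^ (p ^ n)} := by
    intro f hf
    rw [hA] at hf
    exact aux_claim1 p n hp hn hpR F hFlow f hf.1 hf.2
  refine ⟨fun f hf => ⟨fun k => PowerSeries.coeff (p ^ k) f, key1 f hf⟩, ?_, ?_⟩
  · intro f hf
    rw [hG]
    refine ⟨fun k => PowerSeries.coeff (p ^ k) f, ?_⟩
    rw [Ideal.Quotient.eq, hJ, Ideal.mem_span_singleton, Polynomial.X_pow_dvd_iff]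
    intro d hd
    have hco := (PowerSeries.X_pow_dvd_iff.1 (Ideal.mem_span_singleton.1 (key1 f hf))) d hd
    rw [map_sub, sub_eq_zero] at hco
    rw [Polynomial.coeff_sub, PowerSeries.coeff_trunc, if_pos hd, aux_poly_coeff, ← hco,
      sub_self]
  · intro f hf g hg
    rw [hA] at hf
    have hf0 : PowerSeries.constantCoeff f = 0 := by
      have hdvd2 := (PowerSeries.X_pow_dvd_iff).1 (Ideal.mem_span_singleton.1 hf.1) 0
        (by omega)
      rw [← PowerSeries.coeff_zero_eq_constantCoeff]
      simpa using hdvd2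
    have hN : 0 < p ^ n := pow_pos hp.pos n
    rw [Ideal.Quotient.eq, hJ, Ideal.mem_span_singleton, Polynomial.X_pow_dvd_iff]
    intro d hd
    rw [Polynomial.coeff_sub, PowerSeries.coeff_trunc, if_pos hd,
      aux_claim3 (p ^ n) hN f g hf0 d hd, sub_self]
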